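/- Let G be a finite group, let 𝓕 be a family of subgroups of G, and let 𝓐 ⊆ 𝓕 be a collection of subgroups of G that is closed under conjugation and under intersection of pairs of its members, and such that every subgroup belonging to 𝓕 is contained in some member of 𝓐. Then the inclusion functor O_𝓐(G) ⥤ O_𝓕(G) of orbit categories is final (in Mathlib: CategoryTheory.Functor.Final), i.e., for every H ∈ 𝓕 the comma category of objects of O_𝓐(G) equipped with a G-map from G/H is connected, and colimits indexed by O_𝓕(G) may be computed after restriction to O_𝓐(G). -/

import Mathlib

open CategoryTheory

universe u

variable (G : Type u) [Group G]

/-- The orbit category `O_S(G)` attached to a collection `S` of subgroups of `G`: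
objects are the subgroups `H ∈ S` (thought of as the coset `G`-sets `G/H` with the
translation action), and morphisms are the `G`-equivariant maps `G/H → G/K`. -/
structure OrbitCat (S : Set (Subgroup G)) where
  /-- The subgroup `H`, representing the `G`-set `G/H`. -/
  pt : Subgroup G
  mem : pt ∈ S

instance {S : Set (Subgroup G)} : Category (OrbitCat G S) where
  Hom A B := { f : G ⧸ A.pt → G ⧸ B.pt // ∀ (g : G) (x : G ⧸ A.pt), f (g • x) = g • f x }
  id A := ⟨id, fun _ _ => rfl⟩
  comp f g := ⟨g.1 ∘ f.1, fun a x => by simp [Function.comp, f.2, g.2]⟩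

/-- The inclusion functor `O_S(G) ⥤ O_T(G)` for `S ⊆ T`. -/
def orbitIncl {S T : Set (Subgroup G)} (h : S ⊆ T) : OrbitCat G S ⥤ OrbitCat G T where
  obj A := ⟨A.pt, h A.mem⟩
  map f := f

section Aux

variable {G}

/-- The `G`-map `G/A → G/B`, `xA ↦ xgB`, defined when `g⁻¹Ag ≤ B`. -/
def cosetMap {A B : Subgroup G} (g : G) (h : ∀ a ∈ A, g⁻¹ * a * g ∈ B) :
    G ⧸ A → G ⧸ B := fun x =>
  Quotient.liftOn' x (fun y => QuotientGroup.mk (y * g)) (fun y z hyz => by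
    apply Quotient.sound'
    rw [QuotientGroup.leftRel_apply] at hyz ⊢
    have := h _ hyz
    convert this using 1
    group)

theorem cosetMap_mk {A B : Subgroup G} (g : G) (h : ∀ a ∈ A, g⁻¹ * a * g ∈ B) (x : G) :
    cosetMap g h (QuotientGroup.mk x) = QuotientGroup.mk (x * g) := rfl

theorem cosetMap_equivariant {A B : Subgroup G} (g : G) (h : ∀ a ∈ A, g⁻¹ * a * g ∈ B)
    (a : G) (x : G ⧸ A) : cosetMap g h (a • x) = a • cosetMap g h x := by
  induction x using QuotientGroup.induction_on with
  | H y => show QuotientGroup.mk (a * y * g) = QuotientGroup.mk (a * (y * g)); rw [mul_assoc]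

/-- Every equivariant map `G/A → G/B` is `xA ↦ xgB` where `gB = f(1A)`. -/
theorem hom_eq_cosetMap {A B : Subgroup G} (f : G ⧸ A → G ⧸ B)
    (hf : ∀ (g : G) (x : G ⧸ A), f (g • x) = g • f x) (g : G)
    (hg : f (QuotientGroup.mk 1) = QuotientGroup.mk g) (x : G) :
    f (QuotientGroup.mk x) = QuotientGroup.mk (x * g) := by
  have : (QuotientGroup.mk x : G ⧸ A) = x • QuotientGroup.mk 1 := by
    show _ = QuotientGroup.mk (x * 1); rw [mul_one]
  rw [this, hf, hg]; rfl

theorem le_conj_of_hom {A B : Subgroup G} (f : G ⧸ A → G ⧸ B)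
    (hf : ∀ (g : G) (x : G ⧸ A), f (g • x) = g • f x) (g : G)
    (hg : f (QuotientGroup.mk 1) = QuotientGroup.mk g) :
    A ≤ B.map (MulAut.conj g).toMonoidHom := by
  intro a ha
  have h1 : f (QuotientGroup.mk a) = QuotientGroup.mk (a * g) := hom_eq_cosetMap f hf g hg a
  have h2 : (QuotientGroup.mk a : G ⧸ A) = QuotientGroup.mk 1 := by
    apply QuotientGroup.eq.2; simpa using inv_mem ha
  rw [h2, hg] at h1
  have h3 : g⁻¹ * (a * g) ∈ B := QuotientGroup.eq.1 h1
  refine ⟨g⁻¹ * a * g, by simpa [mul_assoc] using h3, ?_⟩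
  show g * (g⁻¹ * a * g) * g⁻¹ = a
  group

end Aux

/-- **Proposition `furthercofinalcollection` (Section 5.5).**
Let `G` be a finite group, `𝓕` a family of subgroups of `G` (nonempty, closed under
conjugation and under passage to subgroups), and `𝓐 ⊆ 𝓕` a collection of subgroups
closed under conjugation and under pairwise intersection, such that every subgroup
in `𝓕` is contained in some member of `𝓐`.  Then the inclusion functor
`O_𝓐(G) ⥤ O_𝓕(G)` of orbit categories is final. -/
theorem orbitIncl_final {G : Type u} [Group G] [Finite G]
    (𝓕 : Set (Subgroup G)) (h𝓕ne : 𝓕.Nonempty)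
    (h𝓕conj : ∀ H ∈ 𝓕, ∀ g : G, H.map (MulAut.conj g).toMonoidHom ∈ 𝓕)
    (h𝓕sub : ∀ H ∈ 𝓕, ∀ K : Subgroup G, K ≤ H → K ∈ 𝓕)
    (𝓐 : Set (Subgroup G)) (h𝓐𝓕 : 𝓐 ⊆ 𝓕)
    (h𝓐conj : ∀ K ∈ 𝓐, ∀ g : G, K.map (MulAut.conj g).toMonoidHom ∈ 𝓐)
    (h𝓐inf : ∀ K ∈ 𝓐, ∀ K' ∈ 𝓐, K ⊓ K' ∈ 𝓐)
    (h𝓐cof : ∀ H ∈ 𝓕, ∃ K ∈ 𝓐, H ≤ K) :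
    (orbitIncl G h𝓐𝓕).Final := by
  constructor
  intro H
  obtain ⟨K, hK, hHK⟩ := h𝓐cof H.pt H.mem
  have hne : Nonempty (StructuredArrow H (orbitIncl G h𝓐𝓕)) :=
    ⟨StructuredArrow.mk (Y := ⟨K, hK⟩)
      ⟨cosetMap 1 (fun a ha => by simp only [inv_one, one_mul, mul_one]; exact hHK ha), cosetMap_equivariant _ _⟩⟩
  refine zigzag_isConnected fun j₁ j₂ => ?_
  obtain ⟨g₁, hg₁⟩ : ∃ g : G, j₁.hom.1 (QuotientGroup.mk 1) = QuotientGroup.mk g :=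
    Quotient.exists_rep _ |>.imp fun g h => h.symm
  obtain ⟨g₂, hg₂⟩ : ∃ g : G, j₂.hom.1 (QuotientGroup.mk 1) = QuotientGroup.mk g :=
    Quotient.exists_rep _ |>.imp fun g h => h.symm
  have h₁ : H.pt ≤ (j₁.right.pt.map (MulAut.conj g₁).toMonoidHom) :=
    le_conj_of_hom j₁.hom.1 j₁.hom.2 g₁ hg₁
  have h₂ : H.pt ≤ (j₂.right.pt.map (MulAut.conj g₂).toMonoidHom) :=
    le_conj_of_hom j₂.hom.1 j₂.hom.2 g₂ hg₂
  set L : Subgroup G :=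
    (j₁.right.pt.map (MulAut.conj g₁).toMonoidHom) ⊓
      (j₂.right.pt.map (MulAut.conj g₂).toMonoidHom) with hLdef
  have hL : L ∈ 𝓐 :=
    h𝓐inf _ (h𝓐conj _ j₁.right.mem g₁) _ (h𝓐conj _ j₂.right.mem g₂)
  have hcond₁ : ∀ a ∈ L, g₁⁻¹ * a * g₁ ∈ j₁.right.pt := by
    intro a ha
    obtain ⟨k, hk, hka⟩ := ha.1
    have : g₁ * k * g₁⁻¹ = a := hka
    subst this
    convert hk using 1
    group
    exact Iff.rfl
  have hcond₂ : ∀ a ∈ L, g₂⁻¹ * a * g₂ ∈ j₂.right.pt := by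
    intro a ha
    obtain ⟨k, hk, hka⟩ := ha.2
    have : g₂ * k * g₂⁻¹ = a := hka
    subst this
    convert hk using 1
    group
    exact Iff.rfl
  have h0 : ∀ a ∈ H.pt, (1 : G)⁻¹ * a * 1 ∈ L := fun a ha => by
    simp only [inv_one, one_mul, mul_one]; exact le_inf h₁ h₂ ha
  let f₀ : H ⟶ (orbitIncl G h𝓐𝓕).obj (⟨L, hL⟩ : OrbitCat G 𝓐) :=
    ⟨cosetMap 1 h0, cosetMap_equivariant _ _⟩
  let j₀ : StructuredArrow H (orbitIncl G h𝓐𝓕) := StructuredArrow.mk f₀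
  have m₁ : j₀ ⟶ j₁ := by
    refine StructuredArrow.homMk ⟨cosetMap g₁ hcond₁, cosetMap_equivariant _ _⟩ ?_
    apply Subtype.ext
    funext x
    induction x using QuotientGroup.induction_on with
    | H y =>
      show cosetMap g₁ hcond₁ (cosetMap 1 h0 (QuotientGroup.mk y)) = j₁.hom.1 (QuotientGroup.mk y)
      rw [cosetMap_mk, cosetMap_mk, mul_one]
      exact (hom_eq_cosetMap _ j₁.hom.2 g₁ hg₁ y).symm
  have m₂ : j₀ ⟶ j₂ := by
    refine StructuredArrow.homMk ⟨cosetMap g₂ hcond₂, cosetMap_equivariant _ _⟩ ?_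
    apply Subtype.ext
    funext x
    induction x using QuotientGroup.induction_on with
    | H y =>
      show cosetMap g₂ hcond₂ (cosetMap 1 h0 (QuotientGroup.mk y)) = j₂.hom.1 (QuotientGroup.mk y)
      rw [cosetMap_mk, cosetMap_mk, mul_one]
      exact (hom_eq_cosetMap _ j₂.hom.2 g₂ hg₂ y).symm
  have z1 : Zigzag j₁ j₀ := Relation.ReflTransGen.single (Or.inr ⟨m₁⟩)
  exact z1.tail (Or.inl ⟨m₂⟩)
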